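/- Let g be a positive integer and let τ be a symmetric g×g complex matrix whose imaginary part is positive definite. Then the function z ↦ θ(z,τ) = ∑_{n∈ℤ^g} exp(πi nᵀτn + 2πi nᵀz) is analytic (holomorphic) on all of ℂ^g. -/

import Mathlib

open Complex
open scoped Nat

private lemma rta_exp_pow_le {x : ℝ} (hx : 0 ≤ x) (k : ℕ) :
    x ^ k / k ! ≤ Real.exp x := by
  have h1 : Real.exp x = ∑' n : ℕ, x ^ n / n ! := by
    rw [Real.exp_eq_exp_ℝ, NormedSpace.exp_eq_tsum_div]
  rw [h1]
  exact Summable.le_tsum (Real.summable_pow_div_factorial x) k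
    (fun j _ => by positivity)

private lemma rta_summable_nat (a b : ℝ) (ha : 0 < a) :
    Summable fun k : ℕ => Real.exp (-a * (k : ℝ) ^ 2 + b * (k : ℝ)) := by
  apply summable_of_ratio_test_tendsto_lt_one (l := 0) one_pos
    (Filter.Eventually.of_forall fun n => (Real.exp_pos _).ne')
  have heq : ∀ n : ℕ, ‖Real.exp (-a * ((n : ℝ) + 1) ^ 2 + b * ((n : ℝ) + 1))‖ /
      ‖Real.exp (-a * (n : ℝ) ^ 2 + b * (n : ℝ))‖
      = Real.exp ((b - a) + (-(2 * a)) * (n : ℝ)) := by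
    intro n
    rw [Real.norm_eq_abs, Real.norm_eq_abs, abs_of_pos (Real.exp_pos _),
      abs_of_pos (Real.exp_pos _), ← Real.exp_sub]
    ring_nf
  have : Filter.Tendsto (fun n : ℕ => Real.exp ((b - a) + (-(2 * a)) * (n : ℝ)))
      Filter.atTop (nhds 0) := by
    apply Real.tendsto_exp_atBot.comp
    apply Filter.tendsto_atBot_add_const_left
    apply Filter.Tendsto.const_mul_atTop_of_neg (by linarith : -(2 * a) < 0)
    exact tendsto_natCast_atTop_atTop
  refine this.congr fun n => ?_
  rw [← heq n]
  push_cast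
  ring_nf


private lemma rta_summable_int (a b : ℝ) (ha : 0 < a) :
    Summable fun m : ℤ => Real.exp (-a * (m : ℝ) ^ 2 + b * |(m : ℝ)|) := by
  have hnat : Summable fun k : ℕ => Real.exp (-a * (k : ℝ) ^ 2 + b * (k : ℝ)) := by
    exact rta_summable_nat a b ha
  apply Summable.of_nat_of_neg
  · refine hnat.congr fun k => ?_
    rw [show (((k : ℕ) : ℤ) : ℝ) = (k : ℝ) by push_cast; rfl,
      _root_.abs_of_nonneg (by positivity : (0:ℝ) ≤ (k : ℝ))]
  · refine hnat.congr fun k => ?_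
    rw [show ((-(k : ℕ) : ℤ) : ℝ) = -(k : ℝ) by push_cast; ring,
      abs_neg, _root_.abs_of_nonneg (by positivity : (0:ℝ) ≤ (k : ℝ)), neg_sq]

private lemma rta_summable_pi {f : ℤ → ℝ} (hf : Summable f) (h0 : ∀ m, 0 ≤ f m) (G : ℕ) :
    Summable fun n : Fin G → ℤ => ∏ i, f (n i) := by
  induction G with
  | zero =>
    haveI : Subsingleton (Fin 0 → ℤ) := ⟨fun a b => funext fun i => i.elim0⟩
    haveI : Finite (Fin 0 → ℤ) := Finite.of_subsingleton
    exact Summable.of_finite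
  | succ G ih =>
    have h2 : Summable fun p : ℤ × (Fin G → ℤ) => f p.1 * ∏ i, f (p.2 i) := by
      apply Summable.mul_of_nonneg hf ih (fun m => h0 m)
      exact fun n => Finset.prod_nonneg fun i _ => h0 _
    rw [← (Fin.consEquiv fun _ => ℤ).summable_iff]
    refine h2.congr fun p => ?_
    simp only [Function.comp_apply, Fin.consEquiv_apply]
    rw [Fin.prod_univ_succ]
    simp


private lemma rta_coercive {g : ℕ} (hg : 0 < g) {A : Matrix (Fin g) (Fin g) ℝ}
    (hA : A.PosDef) :
    ∃ c > 0, ∀ x : Fin g → ℝ, c * (∑ i, x i ^ 2) ≤ ∑ i, ∑ j, x i * A i j * x j := by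
  classical
  set q : (Fin g → ℝ) → ℝ := fun x => ∑ i, ∑ j, x i * A i j * x j with hq
  have hq_eq : ∀ x : Fin g → ℝ, q x = dotProduct x (A.mulVec x) := by
    intro x
    simp only [q, dotProduct, Matrix.mulVec, Finset.mul_sum]
    exact Finset.sum_congr rfl fun i _ => Finset.sum_congr rfl fun j _ => by
      ring
  have hq_pos : ∀ x : Fin g → ℝ, x ≠ 0 → 0 < q x := by
    intro x hx
    rw [hq_eq]
    simpa using hA.dotProduct_mulVec_pos hx
  have hq_smul : ∀ (s : ℝ) (x : Fin g → ℝ), q (s • x) = s ^ 2 * q x := by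
    intro s x
    simp only [q, Pi.smul_apply, smul_eq_mul, Finset.mul_sum]
    exact Finset.sum_congr rfl fun i _ => Finset.sum_congr rfl fun j _ => by ring
  -- compactness on the Euclidean sphere
  set E := EuclideanSpace ℝ (Fin g)
  have hcont : Continuous fun x : E => q x := by
    apply continuous_finset_sum
    intro i _
    apply continuous_finset_sum
    intro j _
    exact (((EuclideanSpace.proj i).continuous.mul continuous_const).mul
      (EuclideanSpace.proj j).continuous)
  have hne : (Metric.sphere (0 : E) 1).Nonempty := by
    refine ⟨EuclideanSpace.single ⟨0, hg⟩ (1 : ℝ), ?_⟩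
    rw [mem_sphere_zero_iff_norm, EuclideanSpace.norm_single]; exact norm_one
  obtain ⟨x₀, hx₀S, hmin⟩ := (isCompact_sphere (0 : E) 1).exists_isMinOn hne
    hcont.continuousOn
  have hx₀ : (x₀ : Fin g → ℝ) ≠ 0 := by
    intro h
    have : ‖x₀‖ = 1 := by simpa using hx₀S
    rw [show x₀ = 0 from WithLp.ofLp_injective 2 h] at this
    simp at this
  refine ⟨q x₀, hq_pos _ hx₀, fun x => ?_⟩
  rcases eq_or_ne x 0 with rfl | hx
  · simp [q]
  · set y : E := WithLp.toLp 2 x with hy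
    have hyne : y ≠ 0 := fun h => hx (congrArg WithLp.ofLp h)
    have hr : 0 < ‖y‖ := norm_pos_iff.mpr hyne
    have hu : (‖y‖⁻¹ • y) ∈ Metric.sphere (0 : E) 1 := by
      simp [norm_smul, abs_of_pos (inv_pos.mpr hr), inv_mul_cancel₀ hr.ne']
    have h1 : q x₀ ≤ q (‖y‖⁻¹ • y) := hmin hu
    have h2 : q ((‖y‖⁻¹ : ℝ) • (x : Fin g → ℝ)) = (‖y‖⁻¹) ^ 2 * q x := hq_smul _ _
    have hsum : ∑ i, x i ^ 2 = ‖y‖ ^ 2 := by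
      rw [EuclideanSpace.norm_eq, Real.sq_sqrt (by positivity)]
      exact Finset.sum_congr rfl fun i _ => by rw [Real.norm_eq_abs, _root_.sq_abs]
    have h3 : q x₀ ≤ (‖y‖⁻¹) ^ 2 * q x := by
      calc q x₀ ≤ q (‖y‖⁻¹ • y) := h1
        _ = (‖y‖⁻¹) ^ 2 * q x := h2
    rw [hsum]
    have h4 : q x₀ * ‖y‖ ^ 2 ≤ (‖y‖⁻¹) ^ 2 * q x * ‖y‖ ^ 2 :=
      mul_le_mul_of_nonneg_right h3 (by positivity)
    calc q x₀ * ‖y‖ ^ 2 ≤ (‖y‖⁻¹) ^ 2 * q x * ‖y‖ ^ 2 := h4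
      _ = q x := by field_simp


/-- The Riemann theta function `θ(·, τ) : ℂ^g → ℂ`. -/
noncomputable def theta {g : ℕ} (τ : Matrix (Fin g) (Fin g) ℂ) (z : Fin g → ℂ) : ℂ :=
  ∑' n : Fin g → ℤ,
    Complex.exp ((Real.pi : ℂ) * Complex.I *
        (∑ i, ∑ j, (n i : ℂ) * τ i j * (n j : ℂ))
      + 2 * (Real.pi : ℂ) * Complex.I * ∑ i, (n i : ℂ) * z i)

set_option maxHeartbeats 1000000 in
/-- For `τ` in the Siegel upper half-space, the Riemann theta function
`z ↦ θ(z, τ)` is analytic (holomorphic) on all of `ℂ^g`. -/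
theorem riemann_theta_analytic (g : ℕ) (hg : 0 < g)
    (τ : Matrix (Fin g) (Fin g) ℂ) (hsym : τ.IsSymm)
    (hpos : (Matrix.of fun i j => (τ i j).im).PosDef) :
    ∀ z : Fin g → ℂ, AnalyticAt ℂ (theta τ) z := by
  intro z₀
  classical
  obtain ⟨c₀, hc₀, hco⟩ : ∃ c > 0, ∀ x : Fin g → ℝ,
      c * (∑ i, x i ^ 2) ≤ ∑ i, ∑ j, x i * (Matrix.of fun i j => (τ i j).im) i j * x j :=
    rta_coercive hg hpos
  set S1 : (Fin g → ℤ) → ℝ := fun n => ∑ i, |(n i : ℝ)| with hS1def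
  set S2 : (Fin g → ℤ) → ℝ := fun n => ∑ i, ((n i : ℝ)) ^ 2 with hS2def
  have hS1_nonneg : ∀ n, 0 ≤ S1 n := fun n => Finset.sum_nonneg fun i _ => abs_nonneg _
  -- the linear maps
  set L : (Fin g → ℤ) → (Fin g → ℂ) →L[ℂ] ℂ := fun n =>
    ∑ i, ((2 * (Real.pi : ℂ) * Complex.I * (n i : ℂ)) • ContinuousLinearMap.proj i) with hLdef
  have hLapply : ∀ n z, L n z = ∑ i, 2 * (Real.pi : ℂ) * Complex.I * (n i : ℂ) * z i := by
    intro n z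
    simp [hLdef, ContinuousLinearMap.sum_apply, smul_eq_mul]
  set c : (Fin g → ℤ) → ℂ := fun n =>
    cexp ((Real.pi : ℂ) * Complex.I * ∑ i, ∑ j, (n i : ℂ) * τ i j * (n j : ℂ)) with hcdef
  have htheta : ∀ z, theta τ z = ∑' n, c n * cexp (L n z) := by
    intro z
    refine tsum_congr fun n => ?_
    rw [Complex.exp_add, hLapply]
    congr 2
    rw [Finset.mul_sum]
    exact Finset.sum_congr rfl fun i _ => by ring
  -- norm bounds
  have hLnorm : ∀ n, ‖L n‖ ≤ 2 * Real.pi * S1 n := by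
    intro n
    apply ContinuousLinearMap.opNorm_le_bound _
      (mul_nonneg (by positivity) (hS1_nonneg n))
    intro z
    rw [hLapply]
    calc ‖∑ i, 2 * (Real.pi : ℂ) * Complex.I * (n i : ℂ) * z i‖
        ≤ ∑ i, ‖2 * (Real.pi : ℂ) * Complex.I * (n i : ℂ) * z i‖ := norm_sum_le _ _
      _ ≤ ∑ i, 2 * Real.pi * |(n i : ℝ)| * ‖z‖ := by
          refine Finset.sum_le_sum fun i _ => ?_
          have h1 : ‖2 * (Real.pi : ℂ) * Complex.I * (n i : ℂ) * z i‖
              = 2 * Real.pi * |(n i : ℝ)| * ‖z i‖ := by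
            rw [norm_mul, norm_mul, norm_mul, norm_mul]
            simp [Complex.norm_real, _root_.abs_of_nonneg Real.pi_pos.le]
          rw [h1]
          exact mul_le_mul_of_nonneg_left (norm_le_pi_norm z i) (by positivity)
      _ = 2 * Real.pi * S1 n * ‖z‖ := by
          rw [hS1def, ← Finset.sum_mul, Finset.mul_sum]
  have hcnorm : ∀ n, ‖c n‖ ≤ Real.exp (-(Real.pi * c₀) * S2 n) := by
    intro n
    have him : (∑ i, ∑ j, (n i : ℂ) * τ i j * (n j : ℂ)).im
        = ∑ i, ∑ j, (n i : ℝ) * (Matrix.of fun i j => (τ i j).im) i j * (n j : ℝ) := by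
      rw [Complex.im_sum]
      refine Finset.sum_congr rfl fun i _ => ?_
      rw [Complex.im_sum]
      refine Finset.sum_congr rfl fun j _ => ?_
      simp [Complex.mul_im, Complex.mul_re, Matrix.of_apply]
    have hre : ((Real.pi : ℂ) * Complex.I *
        ∑ i, ∑ j, (n i : ℂ) * τ i j * (n j : ℂ)).re
        = -(Real.pi * (∑ i, ∑ j, (n i : ℝ) *
            (Matrix.of fun i j => (τ i j).im) i j * (n j : ℝ))) := by
      rw [← him]
      simp [Complex.mul_re, Complex.mul_im]
    rw [hcdef]
    simp only []
    rw [Complex.norm_exp, hre]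
    apply Real.exp_le_exp.mpr
    have h2 := hco (fun i => (n i : ℝ))
    rw [hS2def]
    simp only [neg_mul]
    apply neg_le_neg
    calc Real.pi * c₀ * ∑ i, ((n i : ℝ)) ^ 2
        = Real.pi * (c₀ * ∑ i, ((n i : ℝ)) ^ 2) := by ring
      _ ≤ Real.pi * (∑ i, ∑ j, (n i : ℝ) *
            (Matrix.of fun i j => (τ i j).im) i j * (n j : ℝ)) :=
          mul_le_mul_of_nonneg_left h2 Real.pi_pos.le
  -- master summable family
  set W : ℝ → (Fin g → ℤ) → ℝ := fun b n =>
    Real.exp (-(Real.pi * c₀) * S2 n + b * S1 n) with hWdef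
  have hW : ∀ b : ℝ, Summable (W b) := by
    intro b
    have hs := rta_summable_pi (f := fun m : ℤ =>
        Real.exp (-(Real.pi * c₀) * (m : ℝ) ^ 2 + b * |(m : ℝ)|))
      (rta_summable_int (Real.pi * c₀) b (by positivity))
      (fun m => (Real.exp_pos _).le) g
    refine hs.congr fun n => ?_
    rw [← Real.exp_sum, hWdef]
    simp only []
    congr 1
    rw [hS2def, hS1def, Finset.sum_add_distrib]
    simp only []
    rw [← Finset.mul_sum, ← Finset.mul_sum]
  set R : ℝ := ‖z₀‖ with hRdef
  have hR : 0 ≤ R := norm_nonneg _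
  set a : (Fin g → ℤ) → ℂ := fun n => c n * cexp (L n z₀) with hadef
  have hexp_re_le : ∀ (n : (Fin g → ℤ)) (z : Fin g → ℂ), ‖cexp (L n z)‖ ≤
      Real.exp (‖L n‖ * ‖z‖) := by
    intro n z
    rw [Complex.norm_exp]
    apply Real.exp_le_exp.mpr
    calc (L n z).re ≤ ‖L n z‖ := Complex.re_le_norm _
      _ = ‖L n z‖ := rfl
      _ ≤ ‖L n‖ * ‖z‖ := (L n).le_opNorm z
  have hanorm : ∀ n, ‖a n‖ ≤ W (2 * Real.pi * R) n := by
    intro n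
    rw [hadef]
    calc ‖c n * cexp (L n z₀)‖ = ‖c n‖ * ‖cexp (L n z₀)‖ := norm_mul _ _
      _ ≤ Real.exp (-(Real.pi * c₀) * S2 n) * Real.exp (‖L n‖ * R) := by
          apply mul_le_mul (hcnorm n) (hexp_re_le n z₀) (norm_nonneg _) (Real.exp_pos _).le
      _ ≤ Real.exp (-(Real.pi * c₀) * S2 n) * Real.exp ((2 * Real.pi * S1 n) * R) := by
          apply mul_le_mul_of_nonneg_left _ (Real.exp_pos _).le
          exact Real.exp_le_exp.mpr (mul_le_mul_of_nonneg_right (hLnorm n) hR)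
      _ = W (2 * Real.pi * R) n := by rw [hWdef, ← Real.exp_add]; ring_nf
  -- multilinear maps
  set M : (Fin g → ℤ) → (k : ℕ) → ContinuousMultilinearMap ℂ (fun _ : Fin k => (Fin g → ℂ)) ℂ :=
    fun n k => (ContinuousMultilinearMap.mkPiAlgebraFin ℂ k ℂ).compContinuousLinearMap
      (fun _ => L n) with hMdef
  have hMnorm : ∀ n k, ‖M n k‖ ≤ ‖L n‖ ^ k := by
    intro n k
    calc ‖M n k‖ ≤ ‖ContinuousMultilinearMap.mkPiAlgebraFin ℂ k ℂ‖ * ∏ _i : Fin k, ‖L n‖ :=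
          ContinuousMultilinearMap.norm_compContinuousLinearMap_le _ _
      _ = ‖L n‖ ^ k := by
          rw [ContinuousMultilinearMap.norm_mkPiAlgebraFin, one_mul, Finset.prod_const,
            Finset.card_univ, Fintype.card_fin]
  have hMapply : ∀ n k (y : Fin g → ℂ), M n k (fun _ => y) = (L n y) ^ k := by
    intro n k y
    rw [hMdef]
    simp only [ContinuousMultilinearMap.compContinuousLinearMap_apply,
      ContinuousMultilinearMap.mkPiAlgebraFin_apply, List.prod_ofFn]
    rw [Finset.prod_const, Finset.card_univ, Fintype.card_fin]
  -- two-variable summability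
  have key : ∀ r : ℝ, 0 ≤ r → Summable (fun q : (Fin g → ℤ) × ℕ =>
      ‖a q.1‖ * ((r * ‖L q.1‖) ^ q.2 / q.2 !)) := by
    intro r hr
    rw [summable_prod_of_nonneg (fun q => by positivity)]
    constructor
    · intro n
      exact (Real.summable_pow_div_factorial (r * ‖L n‖)).mul_left ‖a n‖
    · have heval : ∀ n : Fin g → ℤ, ∑' k : ℕ, ‖a n‖ * ((r * ‖L n‖) ^ k / k !)
          = ‖a n‖ * Real.exp (r * ‖L n‖) := by
        intro n
        rw [tsum_mul_left]
        congr 1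
        rw [Real.exp_eq_exp_ℝ, NormedSpace.exp_eq_tsum_div]
      apply Summable.of_nonneg_of_le
        (fun n => tsum_nonneg fun k => by positivity)
        (fun n => ?_) (hW (2 * Real.pi * R + 2 * Real.pi * r))
      rw [heval n]
      calc ‖a n‖ * Real.exp (r * ‖L n‖)
          ≤ W (2 * Real.pi * R) n * Real.exp (r * (2 * Real.pi * S1 n)) := by
            apply mul_le_mul (hanorm n) _ (Real.exp_pos _).le (Real.exp_pos _).le
            exact Real.exp_le_exp.mpr (mul_le_mul_of_nonneg_left (hLnorm n) hr)
        _ = W (2 * Real.pi * R + 2 * Real.pi * r) n := by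
            rw [hWdef]
            simp only []
            rw [← Real.exp_add]
            congr 1
            ring
  -- the formal power series
  set p : FormalMultilinearSeries ℂ (Fin g → ℂ) ℂ :=
    fun k => ∑' n, ((a n * ((k ! : ℂ))⁻¹) • M n k) with hpdef
  have hterm_norm : ∀ (k : ℕ) (n : Fin g → ℤ),
      ‖(a n * ((k ! : ℂ))⁻¹) • M n k‖ ≤ ‖a n‖ * ((1 * ‖L n‖) ^ k / k !) := by
    intro k n
    have h0 : ‖(a n * ((k ! : ℂ))⁻¹) • M n k‖ ≤ ‖a n * ((k ! : ℂ))⁻¹‖ * ‖M n k‖ :=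
      ContinuousMultilinearMap.opNorm_smul_le _ _
    refine h0.trans ?_
    rw [norm_mul, norm_inv, one_mul]
    have h1 : ‖((k ! : ℂ))‖ = (k ! : ℝ) := by norm_num
    rw [h1]
    rw [div_eq_mul_inv, mul_assoc]
    apply mul_le_mul_of_nonneg_left _ (norm_nonneg _)
    rw [mul_comm (‖L n‖ ^ k)]
    apply mul_le_mul_of_nonneg_left (hMnorm n k) (by positivity)
  have hfiber : ∀ (r : ℝ), 0 ≤ r → ∀ k : ℕ, Summable (fun n : Fin g → ℤ =>
      ‖a n‖ * ((r * ‖L n‖) ^ k / k !)) := by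
    intro r hr k
    exact (key r hr).comp_injective (i := fun n : Fin g → ℤ => (n, k))
      (fun n m hnm => (Prod.ext_iff.mp hnm).1)
  have hpk : ∀ k : ℕ, Summable fun n => (a n * ((k ! : ℂ))⁻¹) • M n k := by
    intro k
    exact Summable.of_norm_bounded (hfiber 1 zero_le_one k) (hterm_norm k)
  -- radius is infinite
  have hns : ∀ k : ℕ, Summable fun n => ‖(a n * ((k ! : ℂ))⁻¹) • M n k‖ :=
    fun k => Summable.of_nonneg_of_le (fun n => norm_nonneg _) (hterm_norm k)
      (hfiber 1 zero_le_one k)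
  have hradius : p.radius = ⊤ := by
    apply p.radius_eq_top_of_summable_norm
    intro r
    have hswap : Summable fun q : ℕ × (Fin g → ℤ) =>
        ‖a q.2‖ * (((r : ℝ) * ‖L q.2‖) ^ q.1 / q.1 !) :=
      (key r r.coe_nonneg).prod_symm
    have hsums : Summable fun k : ℕ => ∑' n : Fin g → ℤ,
        ‖a n‖ * (((r : ℝ) * ‖L n‖) ^ k / k !) :=
      ((summable_prod_of_nonneg (fun q => by positivity)).mp hswap).2
    apply Summable.of_nonneg_of_le (fun k => by positivity) (fun k => ?_) hsums
    have h1 : ‖p k‖ ≤ ∑' n, ‖a n‖ * ((1 * ‖L n‖) ^ k / k !) := by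
      rw [hpdef]
      refine (norm_tsum_le_tsum_norm (hns k)).trans ?_
      exact Summable.tsum_le_tsum (hterm_norm k) (hns k) (hfiber 1 zero_le_one k)
    calc ‖p k‖ * (r : ℝ) ^ k
        ≤ (∑' n, ‖a n‖ * ((1 * ‖L n‖) ^ k / k !)) * (r : ℝ) ^ k :=
          mul_le_mul_of_nonneg_right h1 (by positivity)
      _ = ∑' n, ‖a n‖ * (((r : ℝ) * ‖L n‖) ^ k / k !) := by
          rw [← tsum_mul_right]
          refine tsum_congr fun n => ?_
          rw [one_mul, mul_pow]
          ring
  -- the HasSum statement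
  have hhassum : ∀ y : Fin g → ℂ, HasSum (fun k : ℕ => p k fun _ => y) (theta τ (z₀ + y)) := by
    intro y
    set F : (Fin g → ℤ) × ℕ → ℂ := fun q => a q.1 * ((L q.1 y) ^ q.2 / (q.2 ! : ℂ))
      with hFdef
    have hFnorm : ∀ q : (Fin g → ℤ) × ℕ,
        ‖F q‖ ≤ ‖a q.1‖ * ((‖y‖ * ‖L q.1‖) ^ q.2 / q.2 !) := by
      intro q
      rw [hFdef]
      simp only []
      rw [norm_mul, norm_div, norm_pow]
      have h1 : ‖((q.2 ! : ℂ))‖ = (q.2 ! : ℝ) := by norm_num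
      rw [h1]
      refine mul_le_mul_of_nonneg_left ?_ (norm_nonneg _)
      refine (div_le_div_iff_of_pos_right (by positivity)).mpr ?_
      refine pow_le_pow_left₀ (norm_nonneg _) ?_ _
      rw [mul_comm]
      exact (L q.1).le_opNorm y
    have hF : Summable F := Summable.of_norm_bounded (key ‖y‖ (norm_nonneg y)) hFnorm
    have hfibk : ∀ n : Fin g → ℤ, HasSum (fun k => F (n, k)) (a n * cexp (L n y)) := by
      intro n
      have h := (NormedSpace.expSeries_div_hasSum_exp (L n y)).mul_left (a n)
      rw [Complex.exp_eq_exp_ℂ]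
      exact h
    have hGsum : HasSum (fun n => a n * cexp (L n y)) (∑' q, F q) :=
      hF.hasSum.prod_fiberwise hfibk
    have hthv : theta τ (z₀ + y) = ∑' q, F q := by
      rw [htheta, ← hGsum.tsum_eq]
      refine tsum_congr fun n => ?_
      rw [map_add, Complex.exp_add, hadef]
      ring
    have hkfib : ∀ k : ℕ, Summable fun n => F (n, k) :=
      fun k => hF.comp_injective (fun n m hnm => (Prod.ext_iff.mp hnm).1)
    have hswapF : Summable fun q : ℕ × (Fin g → ℤ) => F (q.2, q.1) :=
      hF.prod_symm
    have hts : (∑' q : ℕ × (Fin g → ℤ), F (q.2, q.1)) = ∑' q, F q :=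
      (Equiv.prodComm ℕ (Fin g → ℤ)).tsum_eq F
    have hksum : HasSum (fun k => ∑' n, F (n, k)) (∑' q, F q) := by
      have h := hswapF.hasSum
      rw [hts] at h
      exact h.prod_fiberwise fun k => (hkfib k).hasSum
    have hpkeval : ∀ k : ℕ, (p k fun _ => y) = ∑' n, F (n, k) := by
      intro k
      let ev : (ContinuousMultilinearMap ℂ (fun _ : Fin k => (Fin g → ℂ)) ℂ) →L[ℂ] ℂ :=
        LinearMap.mkContinuous
          { toFun := fun f => f (fun _ => y)
            map_add' := fun f h => rfl
            map_smul' := fun s f => rfl }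
          (∏ _i : Fin k, ‖y‖)
          (fun f => by
            simpa [mul_comm] using f.le_opNorm (fun _ => y))
      have h : HasSum (fun n => ev ((a n * ((k ! : ℂ))⁻¹) • M n k))
          (ev (∑' n, (a n * ((k ! : ℂ))⁻¹) • M n k)) := (hpk k).hasSum.mapL ev
      have h2 : ∀ n : Fin g → ℤ,
          ev ((a n * ((k ! : ℂ))⁻¹) • M n k) = F (n, k) := by
        intro n
        have he : ev ((a n * ((k ! : ℂ))⁻¹) • M n k)
            = ((a n * ((k ! : ℂ))⁻¹) • M n k) (fun _ => y) := rfl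
        rw [he, ContinuousMultilinearMap.smul_apply, hMapply]
        simp only [hFdef, smul_eq_mul]
        rw [div_eq_mul_inv]
        ring
      have h3 : HasSum (fun n => F (n, k)) (p k fun _ => y) := by
        have hpe : (p k fun _ => y) = ev (∑' n, (a n * ((k ! : ℂ))⁻¹) • M n k) := rfl
        rw [hpe, show (fun n => F (n, k))
          = fun n => ev ((a n * ((k ! : ℂ))⁻¹) • M n k) from funext fun n => (h2 n).symm]
        exact h
      exact h3.tsum_eq.symm
    rw [hthv, show (fun k => (p k fun _ => y)) = fun k => ∑' n, F (n, k) from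
      funext hpkeval]
    exact hksum
  have hball : HasFPowerSeriesOnBall (theta τ) p z₀ ⊤ :=
    { r_le := le_of_eq hradius.symm
      r_pos := ENNReal.zero_lt_top
      hasSum := fun {y} _ => hhassum y }
  exact hball.analyticAt
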